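/- For each fixed j with 1 ≤ j ≤ 5, a_{n,j}/a_n → 0 as n → ∞, where a_n is the number of Carlitz compositions of n and a_{n,j} is the number of Carlitz compositions of n with no part equal to j. -/

import Mathlib

open Filter

/-- A list of natural numbers is a composition of `n` if all its entries are
positive and they sum to `n`. -/
def IsComposition (n : ℕ) (L : List ℕ) : Prop :=
  (∀ x ∈ L, 0 < x) ∧ L.sum = n

/-- A composition is Carlitz if adjacent parts are different. -/
def IsCarlitz (L : List ℕ) : Prop :=
  L.Chain' (· ≠ ·)

/-- `carlitzCount n` is the number of Carlitz compositions of `n`. -/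
noncomputable def carlitzCount (n : ℕ) : ℕ :=
  Nat.card {L : List ℕ // IsComposition n L ∧ IsCarlitz L}

/-- `carlitzCountAvoid n j` is the number of Carlitz compositions of `n`
having no part equal to `j`. -/
noncomputable def carlitzCountAvoid (n j : ℕ) : ℕ :=
  Nat.card {L : List ℕ // IsComposition n L ∧ IsCarlitz L ∧ j ∉ L}

/-- length of a positive list is at most its sum -/
lemma length_le_sum {L : List ℕ} (h : ∀ x ∈ L, 0 < x) : L.length ≤ L.sum := by
  induction L with
  | nil => simp
  | cons a t ih =>
    simp only [List.length_cons, List.sum_cons]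
    have ha : 1 ≤ a := h a (by simp)
    have := ih (fun x hx => h x (by simp [hx]))
    omega

lemma mem_le_sum {L : List ℕ} {x : ℕ} (hx : x ∈ L) : x ≤ L.sum :=
  List.single_le_sum (fun y _ => Nat.zero_le y) x hx

/-- padded-function injectivity -/
lemma pad_inj : ∀ (T : ℕ) (L L' : List ℕ), (∀ x ∈ L, 0 < x) → (∀ x ∈ L', 0 < x) →
    L.length < T → L'.length < T →
    (∀ k, k < T → L.getD k 0 = L'.getD k 0) → L = L' := by
  intro T
  induction T with
  | zero => intro L L' _ _ h; omega
  | succ T ih =>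
    intro L L' hL hL' hlen hlen' hk
    match L, L' with
    | [], [] => rfl
    | [], a :: t =>
      have h1 := hk 0 (by omega)
      have h2 := hL' a (by simp)
      simp at h1; omega
    | a :: t, [] =>
      have h1 := hk 0 (by omega)
      have h2 := hL a (by simp)
      simp at h1; omega
    | a :: t, b :: s =>
      have h0 := hk 0 (by omega)
      simp at h0
      subst h0
      have := ih t s (fun x hx => hL x (by simp [hx])) (fun x hx => hL' x (by simp [hx]))
        (by simp at hlen; omega) (by simp at hlen'; omega)
        (fun k hk' => by have := hk (k+1) (by omega); simpa using this)
      rw [this]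

/-- any family of compositions of n is finite -/
lemma comp_finite (n : ℕ) (p : List ℕ → Prop) :
    Finite {L : List ℕ // IsComposition n L ∧ p L} := by
  apply Finite.of_injective
    (fun x : {L : List ℕ // IsComposition n L ∧ p L} =>
      (fun k : Fin (n+1) => (⟨x.1.getD k 0, by
        rcases Nat.lt_or_ge (k : ℕ) x.1.length with h | h
        · have hmem : x.1.getD k 0 ∈ x.1 := by
            rw [List.getD_eq_getElem _ _ h]; exact List.getElem_mem h
          have := mem_le_sum hmem
          rw [x.2.1.2] at this; omega
        · rw [List.getD_eq_default _ _ h]; omega⟩ : Fin (n+1))))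
  intro x y hxy
  apply Subtype.ext
  apply pad_inj (n+1) _ _ x.2.1.1 y.2.1.1
  · have := length_le_sum x.2.1.1; rw [x.2.1.2] at this; omega
  · have := length_le_sum y.2.1.1; rw [y.2.1.2] at this; omega
  · intro k hk
    simpa using congrArg Fin.val (congrFun hxy ⟨k, hk⟩)

open Classical in
lemma card_split (n : ℕ) (p Q : List ℕ → Prop) :
    Nat.card {L : List ℕ // IsComposition n L ∧ p L} ≤
      Nat.card {L : List ℕ // IsComposition n L ∧ (p L ∧ Q L)} +
      Nat.card {L : List ℕ // IsComposition n L ∧ (p L ∧ ¬ Q L)} := by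
  have h1 := comp_finite n (fun L => p L ∧ Q L)
  have h2 := comp_finite n (fun L => p L ∧ ¬ Q L)
  rw [← Nat.card_sum]
  apply Nat.card_le_card_of_injective
    (fun x : {L : List ℕ // IsComposition n L ∧ p L} =>
      if h : Q x.1 then Sum.inl ⟨x.1, x.2.1, x.2.2, h⟩ else Sum.inr ⟨x.1, x.2.1, x.2.2, h⟩)
  intro a b hab
  dsimp at hab
  split_ifs at hab <;> simp_all [Subtype.ext_iff]

lemma card_short (n T : ℕ) (p : List ℕ → Prop) :
    Nat.card {L : List ℕ // IsComposition n L ∧ (p L ∧ L.length < T)} ≤ (n+1)^T := by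
  have : Nat.card (Fin T → Fin (n+1)) = (n+1)^T := by
    simp [Nat.card_eq_fintype_card]
  rw [← this]
  apply Nat.card_le_card_of_injective
    (fun x : {L : List ℕ // IsComposition n L ∧ (p L ∧ L.length < T)} =>
      (fun k : Fin T => (⟨x.1.getD k 0, by
        rcases Nat.lt_or_ge (k : ℕ) x.1.length with h | h
        · have hmem : x.1.getD k 0 ∈ x.1 := by
            rw [List.getD_eq_getElem _ _ h]; exact List.getElem_mem h
          have := mem_le_sum hmem
          rw [x.2.1.2] at this; omega
        · rw [List.getD_eq_default _ _ h]; omega⟩ : Fin (n+1))))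
  intro x y hxy
  apply Subtype.ext
  apply pad_inj T _ _ x.2.1.1 y.2.1.1 x.2.2.2 y.2.2.2
  intro k hk
  simpa using congrArg Fin.val (congrFun hxy ⟨k, hk⟩)

/-- splitting at the first occurrence of j -/
lemma split_first (j : ℕ) : ∀ (P P' Q Q' : List ℕ), j ∉ P → j ∉ P' →
    P ++ j :: Q = P' ++ j :: Q' → P = P' ∧ Q = Q' := by
  intro P
  induction P with
  | nil =>
    intro P' Q Q' _ hP' h
    cases P' with
    | nil => simpa using h
    | cons a t =>
      simp at h
      exact absurd (h.1 ▸ List.mem_cons_self (a := a) (l := t)) hP'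
  | cons a t ih =>
    intro P' Q Q' hP hP' h
    cases P' with
    | nil =>
      simp at h
      exact absurd (h.1 ▸ List.mem_cons_self (a := a) (l := t)) hP
    | cons b s =>
      simp at h
      obtain ⟨rfl, h2⟩ := h
      have := ih s Q Q' (fun hj => hP (List.mem_cons_of_mem _ hj))
        (fun hj => hP' (List.mem_cons_of_mem _ hj)) h2
      exact ⟨by rw [this.1], this.2⟩

/-- the insertion injection -/
lemma key_insert (n j T : ℕ) (hj : 1 ≤ j) :
    (T+1) * Nat.card {L : List ℕ // IsComposition n L ∧ ((IsCarlitz L ∧ j ∉ L) ∧ ¬ L.length < T)}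
      ≤ carlitzCount (n+j) := by
  have hfin := comp_finite (n+j) IsCarlitz
  rw [show (T+1) * Nat.card {L : List ℕ // IsComposition n L ∧ ((IsCarlitz L ∧ j ∉ L) ∧ ¬ L.length < T)}
      = Nat.card (Fin (T+1) × {L : List ℕ // IsComposition n L ∧ ((IsCarlitz L ∧ j ∉ L) ∧ ¬ L.length < T)}) by
    rw [Nat.card_prod]; simp]
  apply Nat.card_le_card_of_injective
    (fun ix => ⟨ix.2.1.take ix.1 ++ j :: ix.2.1.drop ix.1, by
      obtain ⟨i, L, ⟨hpos, hsum⟩, ⟨hcar, hnj⟩, hlen⟩ := ix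
      dsimp only
      constructor
      · constructor
        · intro x hx
          simp only [List.mem_append, List.mem_cons] at hx
          rcases hx with h | h | h
          · exact hpos x (List.mem_of_mem_take h)
          · omega
          · exact hpos x (List.mem_of_mem_drop h)
        · rw [List.sum_append, List.sum_cons]
          have : L.take i ++ L.drop i = L := List.take_append_drop _ _
          calc (L.take i).sum + (j + (L.drop i).sum)
              = ((L.take i).sum + (L.drop i).sum) + j := by ring
            _ = L.sum + j := by rw [← List.sum_append, this]
            _ = n + j := by rw [hsum]
      · -- Carlitz
        unfold IsCarlitz List.Chain' at *
        rw [List.isChain_append]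
        have hLC : List.IsChain (· ≠ ·) (L.take i ++ L.drop i) := by
          rw [List.take_append_drop]; exact hcar
        rw [List.isChain_append] at hLC
        refine ⟨hLC.1, ?_, ?_⟩
        · rw [List.isChain_cons]
          refine ⟨?_, hLC.2.1⟩
          intro y hy
          have : y ∈ L.drop i := List.mem_of_mem_head? hy
          intro h; exact hnj (h ▸ List.mem_of_mem_drop this)
        · intro x hx y hy
          have : x ∈ L.take i := List.mem_of_mem_getLast? hx
          simp only [List.head?_cons, Option.mem_def, Option.some.injEq] at hy
          subst hy
          intro h; exact hnj (h ▸ List.mem_of_mem_take this)⟩)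
  rintro ⟨i, L, hL⟩ ⟨i', L', hL'⟩ h
  simp only [Subtype.mk.injEq] at h
  have hjL : j ∉ L.take i.1 := fun hm => hL.2.1.2 (List.mem_of_mem_take hm)
  have hjL' : j ∉ L'.take i'.1 := fun hm => hL'.2.1.2 (List.mem_of_mem_take hm)
  obtain ⟨h1, h2⟩ := split_first j _ _ _ _ hjL hjL' h
  have hLL : L = L' := by
    rw [← List.take_append_drop i.1 L, ← List.take_append_drop i'.1 L', h1, h2]
  have hi : i.1 = i'.1 := by
    have e1 : (L.take i.1).length = i.1 := by
      rw [List.length_take]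
      have : (i : ℕ) ≤ L.length := le_trans (Nat.lt_succ_iff.mp i.2) (Nat.not_lt.mp hL.2.2)
      omega
    have e2 : (L'.take i'.1).length = i'.1 := by
      rw [List.length_take]
      have : (i' : ℕ) ≤ L'.length := le_trans (Nat.lt_succ_iff.mp i'.2) (Nat.not_lt.mp hL'.2.2)
      omega
    rw [← e1, ← e2, h1]
  subst hLL
  simp only [Prod.mk.injEq, Subtype.mk.injEq]
  exact ⟨Fin.ext hi, trivial⟩

/-- one-step reduction map for the smoothness lemma -/
def step (N : List ℕ) : List ℕ × Fin 6 :=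
  match N with
  | [] => ([], 0)
  | x :: N' =>
    if x = 1 then (N', 0)
    else if N'.head? ≠ some (x-1) then ((x-1) :: N', 1)
    else if N'.tail.head? ≠ some (2*x-2) then ((2*x-2) :: N'.tail, 2)
    else if 3 ≤ x then (1 :: (2*x-3) :: N'.tail, 3)
    else if N'.tail.tail.head? ≠ some 4 then (4 :: N'.tail.tail, 4)
    else (1 :: 3 :: N'.tail.tail, 5)

def recover (M : List ℕ) (t : Fin 6) : List ℕ :=
  match (t : ℕ) with
  | 0 => 1 :: M
  | 1 => (M.headD 0 + 1) :: M.tail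
  | 2 => ((M.headD 0)/2 + 1) :: ((M.headD 0)/2) :: M.tail
  | 3 => ((M.tail.headD 0 + 3)/2) :: ((M.tail.headD 0 + 3)/2 - 1) :: M.tail.tail
  | 4 => 2 :: 1 :: 2 :: M.tail
  | _ => 2 :: 1 :: 2 :: M.tail.tail

lemma step_spec (m : ℕ) (N : List ℕ) (h : IsComposition (m+1) N ∧ IsCarlitz N) :
    (IsComposition m (step N).1 ∧ IsCarlitz (step N).1) ∧ recover (step N).1 (step N).2 = N := by
  obtain ⟨⟨hpos, hsum⟩, hcar⟩ := h
  unfold IsCarlitz List.Chain' at *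
  match N with
  | [] => simp at hsum
  | x :: N' =>
    have hx : 0 < x := hpos x (by simp)
    by_cases hx1 : x = 1
    · subst hx1
      have hstep : step (1 :: N') = (N', 0) := by simp [step]
      rw [hstep]
      refine ⟨⟨⟨fun y hy => hpos y (by simp [hy]), by simp at hsum ⊢; omega⟩,
        (List.isChain_cons.mp hcar).2⟩, ?_⟩
      simp [recover]
    · -- x ≥ 2
      have hx2 : 2 ≤ x := by omega
      by_cases hh1 : N'.head? = some (x-1)
      · -- N' = (x-1) :: N''
        match N' with
        | [] => simp at hh1
        | y :: N'' =>
          simp at hh1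
          subst hh1
          by_cases hh2 : N''.head? = some (2*x-2)
          · match N'' with
            | [] => simp at hh2
            | z :: N₄ =>
              simp at hh2
              subst hh2
              by_cases hx3 : 3 ≤ x
              · -- branch 3
                have hstep : step (x :: (x-1) :: (2*x-2) :: N₄) = (1 :: (2*x-3) :: (2*x-2) :: N₄, 3) := by
                  simp [step, hx1, hx3]
                rw [hstep]
                simp only [List.sum_cons] at hsum
                have hc4 : List.Chain' (· ≠ ·) ((2*x-2) :: N₄) :=
                  (List.isChain_cons.mp ((List.isChain_cons.mp hcar).2)).2
                refine ⟨⟨⟨?_, ?_⟩, ?_⟩, ?_⟩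
                · intro y hy
                  simp only [List.mem_cons] at hy
                  rcases hy with rfl | rfl | h
                  · omega
                  · omega
                  · exact hpos y (by simp [h])
                · simp; omega
                · rw [List.isChain_cons_cons, List.isChain_cons_cons]
                  exact ⟨by omega, by omega, hc4⟩
                · simp [recover]
                  omega
              · -- x = 2, z = 2, branch 4/5
                have hxx : x = 2 := by omega
                subst hxx
                simp only [show (2:ℕ)-1 = 1 from rfl, show 2*2-2 = 2 from rfl] at *
                simp only [List.sum_cons] at hsum
                have hc4 : List.Chain' (· ≠ ·) N₄ :=
                  ((List.isChain_cons.mp ((List.isChain_cons.mp ((List.isChain_cons.mp hcar).2)).2)).2)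
                have hhead4 : ∀ w ∈ N₄.head?, (2:ℕ) ≠ w :=
                  (List.isChain_cons.mp ((List.isChain_cons.mp ((List.isChain_cons.mp hcar).2)).2)).1
                by_cases hh3 : N₄.head? = some 4
                · have hstep : step (2 :: 1 :: 2 :: N₄) = (1 :: 3 :: N₄, 5) := by
                    simp [step, hh3]
                  rw [hstep]
                  refine ⟨⟨⟨?_, ?_⟩, ?_⟩, ?_⟩
                  · intro y hy
                    simp only [List.mem_cons] at hy
                    rcases hy with rfl | rfl | h
                    · omega
                    · omega
                    · exact hpos y (by simp [h])
                  · simp; omega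
                  · rw [List.isChain_cons_cons, List.isChain_cons]
                    refine ⟨by omega, ?_, hc4⟩
                    intro w hw
                    rw [hh3] at hw
                    simp at hw
                    omega
                  · simp [recover]
                · have hstep : step (2 :: 1 :: 2 :: N₄) = (4 :: N₄, 4) := by
                    simp [step, hh3]
                  rw [hstep]
                  refine ⟨⟨⟨?_, ?_⟩, ?_⟩, ?_⟩
                  · intro y hy
                    simp only [List.mem_cons] at hy
                    rcases hy with rfl | h
                    · omega
                    · exact hpos y (by simp [h])
                  · simp; omega
                  · rw [List.isChain_cons]
                    refine ⟨?_, hc4⟩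
                    intro w hw
                    intro hne
                    apply hh3
                    rw [← hne] at hw
                    exact hw
                  · simp [recover]
          · -- branch 2
            have hstep : step (x :: (x-1) :: N'') = ((2*x-2) :: N'', 2) := by
              simp only [step, List.head?_cons, List.tail_cons]
              simp [hx1, hh2]
            rw [hstep]
            simp only [List.sum_cons] at hsum
            have hc : List.Chain' (· ≠ ·) N'' :=
              ((List.isChain_cons.mp ((List.isChain_cons.mp hcar).2)).2)
            refine ⟨⟨⟨?_, ?_⟩, ?_⟩, ?_⟩
            · intro y hy
              simp only [List.mem_cons] at hy
              rcases hy with rfl | h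
              · omega
              · exact hpos y (by simp [h])
            · simp; omega
            · rw [List.isChain_cons]
              refine ⟨?_, hc⟩
              intro w hw hne
              exact hh2 (by rw [← hne] at hw; exact hw)
            · simp [recover]
              constructor
              · omega
              · omega
      · -- branch 1
        have hstep : step (x :: N') = ((x-1) :: N', 1) := by
          simp only [step]
          rw [if_neg hx1, if_pos (by simpa using hh1)]
        rw [hstep]
        simp only [List.sum_cons] at hsum
        have hc : List.Chain' (· ≠ ·) N' := (List.isChain_cons.mp hcar).2
        refine ⟨⟨⟨?_, ?_⟩, ?_⟩, ?_⟩
        · intro y hy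
          simp only [List.mem_cons] at hy
          rcases hy with rfl | h
          · omega
          · exact hpos y (by simp [h])
        · simp; omega
        · rw [List.isChain_cons]
          refine ⟨?_, hc⟩
          intro w hw hne
          exact hh1 (by rw [← hne] at hw; exact hw)
        · simp [recover]
          omega

lemma shift_le (m : ℕ) : carlitzCount (m+1) ≤ 6 * carlitzCount m := by
  have hfin := comp_finite m IsCarlitz
  rw [show 6 * carlitzCount m
      = Nat.card ({L : List ℕ // IsComposition m L ∧ IsCarlitz L} × Fin 6) by
    rw [Nat.card_prod]; simp [carlitzCount, mul_comm]]
  apply Nat.card_le_card_of_injective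
    (fun x : {L : List ℕ // IsComposition (m+1) L ∧ IsCarlitz L} =>
      (⟨(step x.1).1, (step_spec m x.1 x.2).1⟩, (step x.1).2))
  intro a b hab
  simp only [Prod.mk.injEq, Subtype.mk.injEq] at hab
  apply Subtype.ext
  rw [← (step_spec m a.1 a.2).2, ← (step_spec m b.1 b.2).2, hab.1, hab.2]

def blk (b : Bool) : List ℕ := if b then [1,2,3] else [1,3,2]

def gg : List Bool → List ℕ
  | [] => []
  | b :: bs => blk b ++ gg bs

lemma gg_sum : ∀ bs, (gg bs).sum = 6 * bs.length := by
  intro bs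
  induction bs with
  | nil => simp [gg]
  | cons b bs ih => cases b <;> simp [gg, blk, ih] <;> omega

lemma gg_pos : ∀ bs, ∀ x ∈ gg bs, 0 < x := by
  intro bs
  induction bs with
  | nil => simp [gg]
  | cons b bs ih =>
    intro x hx
    cases b <;> simp [gg, blk] at hx <;> rcases hx with h | h | h | h <;>
      first | omega | exact ih x h

lemma gg_head : ∀ bs (s : ℕ), (gg bs ++ [1, s]).head? = some 1 := by
  intro bs s
  cases bs with
  | nil => simp [gg]
  | cons b bs => cases b <;> simp [gg, blk]

lemma gg_chain : ∀ bs (s : ℕ), s ≠ 1 → List.Chain' (· ≠ ·) (gg bs ++ [1, s]) := by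
  intro bs
  induction bs with
  | nil => intro s hs; simp [gg, List.Chain', List.isChain_cons_cons]; omega
  | cons b bs ih =>
    intro s hs
    have hh := gg_head bs s
    cases b <;>
    · show List.IsChain (· ≠ ·) (blk _ ++ gg bs ++ [1, s])
      rw [List.append_assoc, List.isChain_append]
      refine ⟨by simp [blk, List.isChain_cons_cons], ih s hs, ?_⟩
      intro x hx y hy
      simp [blk] at hx
      rw [hh] at hy
      simp at hy
      omega

lemma gg_inj : ∀ bs bs', gg bs = gg bs' → bs = bs' := by
  intro bs
  induction bs with
  | nil =>
    intro bs' h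
    cases bs' with
    | nil => rfl
    | cons b t => cases b <;> simp [gg, blk] at h
  | cons b t ih =>
    intro bs' h
    cases bs' with
    | nil => cases b <;> simp [gg, blk] at h
    | cons b' t' =>
      cases b <;> cases b' <;> simp [gg, blk] at h <;>
        first
        | (rw [ih t' h])
        | (exact absurd h.2.1 (by norm_num))

lemma count_lower (n : ℕ) (hn : 6 ≤ n) : 2^(n/6 - 1) ≤ carlitzCount n := by
  have hfin := comp_finite n IsCarlitz
  set t := n / 6 with ht
  have ht1 : 1 ≤ t := by
    rw [ht]; omega
  have hr : 6 * (t - 1) + 6 ≤ n := by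
    have := Nat.div_mul_le_self n 6
    omega
  have hr2 : n ≤ 6 * (t - 1) + 11 := by
    have h1 := Nat.div_add_mod n 6
    have h2 : n % 6 < 6 := Nat.mod_lt _ (by norm_num)
    omega
  set s := n - 6 * (t - 1) - 1 with hs
  have hs5 : 5 ≤ s ∧ s ≤ 10 := by omega
  rw [show (2:ℕ)^(t-1) = Nat.card (Fin (t-1) → Bool) by simp [Nat.card_eq_fintype_card]]
  apply Nat.card_le_card_of_injective
    (fun bv : Fin (t-1) → Bool => (⟨gg (List.ofFn bv) ++ [1, s], by
      refine ⟨⟨?_, ?_⟩, ?_⟩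
      · intro x hx
        simp only [List.mem_append, List.mem_cons] at hx
        rcases hx with h | h | h | h
        · exact gg_pos _ x h
        · omega
        · omega
        · simp at h
      · rw [List.sum_append, gg_sum]
        simp
        omega
      · exact gg_chain _ s (by omega)⟩ :
        {L : List ℕ // IsComposition n L ∧ IsCarlitz L}))
  intro a b hab
  simp only [Subtype.mk.injEq, List.append_cancel_right_eq] at hab
  have := gg_inj _ _ hab
  exact List.ofFn_injective this


lemma shift_pow (k n : ℕ) : carlitzCount (n + k) ≤ 6^k * carlitzCount n := by
  induction k with
  | zero => simp
  | succ k ih =>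
    calc carlitzCount (n + (k+1)) = carlitzCount ((n + k) + 1) := by ring_nf
      _ ≤ 6 * carlitzCount (n + k) := shift_le _
      _ ≤ 6 * (6^k * carlitzCount n) := Nat.mul_le_mul_left _ ih
      _ = 6^(k+1) * carlitzCount n := by ring

lemma main_nat (n j T : ℕ) (hj1 : 1 ≤ j) (hj5 : j ≤ 5) :
    (T+1) * carlitzCountAvoid n j ≤ (T+1) * (n+1)^T + 7776 * carlitzCount n := by
  have h1 : carlitzCountAvoid n j ≤
      Nat.card {L : List ℕ // IsComposition n L ∧ ((IsCarlitz L ∧ j ∉ L) ∧ L.length < T)} +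
      Nat.card {L : List ℕ // IsComposition n L ∧ ((IsCarlitz L ∧ j ∉ L) ∧ ¬ L.length < T)} :=
    card_split n (fun L => IsCarlitz L ∧ j ∉ L) (fun L => L.length < T)
  have h2 := card_short n T (fun L => IsCarlitz L ∧ j ∉ L)
  have h3 := key_insert n j T hj1
  have h4 := shift_pow j n
  have h5 : 6^j ≤ 7776 := by
    calc 6^j ≤ 6^5 := Nat.pow_le_pow_right (by norm_num) hj5
      _ = 7776 := by norm_num
  calc (T+1) * carlitzCountAvoid n j
      ≤ (T+1) * (Nat.card {L : List ℕ // IsComposition n L ∧ ((IsCarlitz L ∧ j ∉ L) ∧ L.length < T)} +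
        Nat.card {L : List ℕ // IsComposition n L ∧ ((IsCarlitz L ∧ j ∉ L) ∧ ¬ L.length < T)}) :=
        Nat.mul_le_mul_left _ h1
    _ = (T+1) * Nat.card {L : List ℕ // IsComposition n L ∧ ((IsCarlitz L ∧ j ∉ L) ∧ L.length < T)} +
        (T+1) * Nat.card {L : List ℕ // IsComposition n L ∧ ((IsCarlitz L ∧ j ∉ L) ∧ ¬ L.length < T)} := by
        ring
    _ ≤ (T+1) * (n+1)^T + carlitzCount (n + j) :=
        Nat.add_le_add (Nat.mul_le_mul_left _ h2) h3
    _ ≤ (T+1) * (n+1)^T + 7776 * carlitzCount n := by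
        refine Nat.add_le_add_left (h4.trans ?_) _
        exact Nat.mul_le_mul_right _ h5

/-- For each fixed `j` with `1 ≤ j ≤ 5`, `a_{n,j}/a_n → 0` as `n → ∞`. -/
theorem small_j_ratio_tendsto_zero (j : ℕ) (hj1 : 1 ≤ j) (hj5 : j ≤ 5) :
    Tendsto (fun n : ℕ => (carlitzCountAvoid n j : ℝ) / (carlitzCount n : ℝ))
      atTop (nhds 0) := by
  rw [Metric.tendsto_atTop]
  intro ε hε
  set T : ℕ := ⌈(15552:ℝ)/ε⌉₊ with hT
  -- 7776/(T+1) ≤ ε/2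
  have hTε : (7776:ℝ)/(T+1) ≤ ε/2 := by
    have h1 : (15552:ℝ)/ε ≤ (T:ℝ) := Nat.le_ceil _
    have h2 : (0:ℝ) < T + 1 := by positivity
    rw [div_le_iff₀ h2]
    have : (15552:ℝ) = ε * (15552/ε) := by field_simp
    nlinarith [h1, hε]
  -- the auxiliary tendsto
  have hg : Tendsto (fun s : ℕ => ((s:ℝ)+1)^T / 2^s) atTop (nhds 0) := by
    have h0 := tendsto_pow_const_div_const_pow_of_one_lt T (show (1:ℝ) < 2 by norm_num)
    have h1 : Tendsto (fun s : ℕ => ((s+1:ℕ):ℝ)^T / 2^(s+1)) atTop (nhds 0) :=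
      h0.comp (tendsto_add_atTop_nat 1)
    have h2 : Tendsto (fun s : ℕ => 2 * (((s+1:ℕ):ℝ)^T / 2^(s+1))) atTop (nhds 0) := by
      simpa using h1.const_mul 2
    refine h2.congr (fun s => ?_)
    push_cast
    rw [pow_succ]
    field_simp
  have hdiv : Tendsto (fun n : ℕ => n / 6) atTop atTop := by
    apply Filter.tendsto_atTop_atTop.mpr
    intro b
    exact ⟨6*b, fun n hn => (Nat.le_div_iff_mul_le (by norm_num)).mpr (by omega)⟩
  have hcomp : Tendsto (fun n : ℕ => (2 * 6^T : ℝ) * ((((n/6 : ℕ)):ℝ)+1)^T / 2^(n/6 : ℕ))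
      atTop (nhds 0) := by
    have := (hg.comp hdiv).const_mul (2 * 6^T : ℝ)
    simp only [mul_zero] at this
    refine this.congr (fun n => ?_)
    simp [Function.comp, mul_div_assoc]
  rw [Metric.tendsto_atTop] at hcomp
  obtain ⟨N₁, hN₁⟩ := hcomp (ε/2) (by positivity)
  refine ⟨max N₁ 6, fun n hn => ?_⟩
  have hn1 : N₁ ≤ n := le_trans (le_max_left _ _) hn
  have hn6 : 6 ≤ n := le_trans (le_max_right _ _) hn
  have ht1 : 1 ≤ n / 6 := by omega
  -- lower bound on carlitzCount n
  have hlow : (2:ℝ)^(n/6 - 1 : ℕ) ≤ (carlitzCount n : ℝ) := by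
    exact_mod_cast Nat.cast_le.mpr (count_lower n hn6)
  have hApos : (0:ℝ) < (carlitzCount n : ℝ) := lt_of_lt_of_le (by positivity) hlow
  -- main inequality over ℝ
  have hmain : ((T:ℝ)+1) * (carlitzCountAvoid n j : ℝ) ≤
      ((T:ℝ)+1) * ((n:ℝ)+1)^T + 7776 * (carlitzCount n : ℝ) := by
    have := main_nat n j T hj1 hj5
    exact_mod_cast this
  have hTpos : (0:ℝ) < (T:ℝ)+1 := by positivity
  -- ratio bound
  have hratio : (carlitzCountAvoid n j : ℝ) / (carlitzCount n : ℝ) ≤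
      ((n:ℝ)+1)^T / (carlitzCount n : ℝ) + 7776/((T:ℝ)+1) := by
    rw [div_add_div _ _ (ne_of_gt hApos) (ne_of_gt hTpos), div_le_div_iff₀ hApos (by positivity)]
    nlinarith [hmain, hApos, hTpos]
  -- bound the first term
  have hnum : ((n:ℝ)+1)^T ≤ (6:ℝ)^T * (((n/6 : ℕ):ℝ)+1)^T := by
    rw [← mul_pow]
    apply pow_le_pow_left₀ (by positivity)
    have : n + 1 ≤ 6 * (n/6) + 6 := by
      have h1 := Nat.div_add_mod n 6
      have h2 : n % 6 < 6 := Nat.mod_lt _ (by norm_num)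
      omega
    push_cast
    calc (n:ℝ) + 1 ≤ 6 * ((n/6 : ℕ):ℝ) + 6 := by exact_mod_cast this
      _ = 6 * (((n/6 : ℕ):ℝ) + 1) := by ring
  have hden : (2:ℝ)^(n/6 : ℕ) / 2 ≤ (carlitzCount n : ℝ) := by
    calc (2:ℝ)^(n/6 : ℕ) / 2 = (2:ℝ)^(n/6 - 1 : ℕ) := by
          rw [show (n/6 : ℕ) = (n/6 - 1) + 1 by omega, pow_succ]
          field_simp
          simp
      _ ≤ _ := hlow
  have hfirst : ((n:ℝ)+1)^T / (carlitzCount n : ℝ) ≤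
      (2 * 6^T : ℝ) * (((n/6 : ℕ):ℝ)+1)^T / 2^(n/6 : ℕ) := by
    have h2pos : (0:ℝ) < (2:ℝ)^(n/6 : ℕ) / 2 := by positivity
    calc ((n:ℝ)+1)^T / (carlitzCount n : ℝ)
        ≤ ((6:ℝ)^T * (((n/6 : ℕ):ℝ)+1)^T) / ((2:ℝ)^(n/6 : ℕ) / 2) :=
          div_le_div₀ (by positivity) hnum h2pos hden
      _ = (2 * 6^T : ℝ) * (((n/6 : ℕ):ℝ)+1)^T / 2^(n/6 : ℕ) := by
          field_simp
  have hsmall := hN₁ n hn1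
  rw [Real.dist_eq, sub_zero] at hsmall
  have hterm : (2 * 6^T : ℝ) * (((n/6 : ℕ):ℝ)+1)^T / 2^(n/6 : ℕ) < ε/2 :=
    lt_of_abs_lt hsmall
  rw [Real.dist_eq, sub_zero]
  have hnonneg : (0:ℝ) ≤ (carlitzCountAvoid n j : ℝ) / (carlitzCount n : ℝ) := by positivity
  rw [abs_of_nonneg hnonneg]
  calc (carlitzCountAvoid n j : ℝ) / (carlitzCount n : ℝ)
      ≤ ((n:ℝ)+1)^T / (carlitzCount n : ℝ) + 7776/((T:ℝ)+1) := hratio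
    _ ≤ (2 * 6^T : ℝ) * (((n/6 : ℕ):ℝ)+1)^T / 2^(n/6 : ℕ) + ε/2 :=
        add_le_add hfirst hTε
    _ < ε/2 + ε/2 := by linarith [hterm]
    _ = ε := by ring
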